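/- (Hardy's inequality) Let q ∈ [1,∞), α > 0, and f : (0,∞) → [0,∞) measurable. Then (∫₀^∞ (∫_ρ^∞ f(t) dt)^q ρ^α dρ/ρ)^{1/q} ≤ (q/α) (∫₀^∞ (t f(t))^q t^α dt/t)^{1/q}. -/

import Mathlib

open MeasureTheory Set ENNReal Filter

lemma lint_Ioi_rpow {s ρ : ℝ} (hs : 0 < s) (hρ : 0 < ρ) :
    ∫⁻ t in Set.Ioi ρ, ENNReal.ofReal (t ^ (-s - 1)) = ENNReal.ofReal (ρ ^ (-s) / s) := by
  rw [← ofReal_integral_eq_lintegral_ofReal (integrableOn_Ioi_rpow_of_lt (by linarith) hρ)]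
  · rw [integral_Ioi_rpow_of_lt (by linarith) hρ]
    congr 1
    rw [show -s - 1 + 1 = -s by ring]
    rw [neg_div, div_neg, neg_neg]
  · filter_upwards [ae_restrict_mem measurableSet_Ioi] with t ht
    exact Real.rpow_nonneg (le_of_lt (hρ.trans ht)) _

lemma lint_Ioo_rpow {s t : ℝ} (hs : 0 < s) (ht : 0 < t) :
    ∫⁻ ρ in Set.Ioo (0:ℝ) t, ENNReal.ofReal (ρ ^ (s - 1)) = ENNReal.ofReal (t ^ s / s) := by
  rw [Measure.restrict_congr_set Ioo_ae_eq_Ioc]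
  have hint : IntegrableOn (fun x : ℝ => x ^ (s - 1)) (Set.Ioc 0 t) := by
    have := intervalIntegral.intervalIntegrable_rpow' (a := 0) (b := t) (by linarith : (-1:ℝ) < s - 1)
    rwa [intervalIntegrable_iff_integrableOn_Ioc_of_le ht.le] at this
  rw [← ofReal_integral_eq_lintegral_ofReal hint]
  · congr 1
    rw [← intervalIntegral.integral_of_le ht.le,
      integral_rpow (Or.inl (by linarith : (-1:ℝ) < s - 1))]
    rw [show s - 1 + 1 = s by ring, Real.zero_rpow hs.ne', sub_zero]
  · filter_upwards [ae_restrict_mem measurableSet_Ioc] with x hx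
    exact Real.rpow_nonneg hx.1.le _

lemma hardy_fubini (h : ℝ → ℝ≥0∞) (hh : Measurable h) {s : ℝ} (hs : 0 < s) :
    ∫⁻ ρ in Set.Ioi (0:ℝ), ENNReal.ofReal (ρ ^ (s-1)) * ∫⁻ t in Set.Ioi ρ, h t
      = ∫⁻ t in Set.Ioi (0:ℝ), ENNReal.ofReal (t ^ s / s) * h t := by
  have hmeas : Measurable (fun p : ℝ × ℝ =>
      if p.1 < p.2 then ENNReal.ofReal (p.1 ^ (s-1)) * h p.2 else 0) := by
    refine Measurable.ite (measurableSet_lt measurable_fst measurable_snd) ?_ measurable_const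
    exact ((measurable_fst.pow measurable_const).ennreal_ofReal).mul (hh.comp measurable_snd)
  have key : ∫⁻ ρ in Set.Ioi (0:ℝ), ∫⁻ t, (if ρ < t then ENNReal.ofReal (ρ ^ (s-1)) * h t else 0)
      = ∫⁻ t, ∫⁻ ρ in Set.Ioi (0:ℝ), (if ρ < t then ENNReal.ofReal (ρ ^ (s-1)) * h t else 0) := by
    exact lintegral_lintegral_swap hmeas.aemeasurable
  calc ∫⁻ ρ in Set.Ioi (0:ℝ), ENNReal.ofReal (ρ ^ (s-1)) * ∫⁻ t in Set.Ioi ρ, h t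
      = ∫⁻ ρ in Set.Ioi (0:ℝ), ∫⁻ t, (if ρ < t then ENNReal.ofReal (ρ ^ (s-1)) * h t else 0) := by
        refine lintegral_congr fun ρ => ?_
        rw [← lintegral_const_mul _ hh, ← lintegral_indicator measurableSet_Ioi]
        refine lintegral_congr fun t => ?_
        simp [Set.indicator_apply, Set.mem_Ioi]
    _ = ∫⁻ t, ∫⁻ ρ in Set.Ioi (0:ℝ), (if ρ < t then ENNReal.ofReal (ρ ^ (s-1)) * h t else 0) := key
    _ = ∫⁻ t, Set.indicator (Set.Ioi (0:ℝ))
          (fun t => ENNReal.ofReal (t ^ s / s) * h t) t := by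
        refine lintegral_congr fun t => ?_
        rcases le_or_gt t 0 with ht | ht
        · rw [Set.indicator_of_notMem (by simpa using ht)]
          have hz : ∀ ρ ∈ Set.Ioi (0:ℝ),
              (if ρ < t then ENNReal.ofReal (ρ ^ (s-1)) * h t else 0) = 0 := fun ρ hρ => by
            rw [if_neg (by linarith [mem_Ioi.mp hρ])]
          rw [setLIntegral_congr_fun measurableSet_Ioi hz]
          simp
        · rw [Set.indicator_of_mem (mem_Ioi.mpr ht)]
          have : ∀ ρ ∈ Set.Ioi (0:ℝ),
              (if ρ < t then ENNReal.ofReal (ρ ^ (s-1)) * h t else 0)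
                = Set.indicator (Set.Iio t) (fun ρ => ENNReal.ofReal (ρ ^ (s-1)) * h t) ρ := by
            intro ρ _; simp [Set.indicator_apply, Set.mem_Iio]
          rw [setLIntegral_congr_fun measurableSet_Ioi this,
            lintegral_indicator measurableSet_Iio, Measure.restrict_restrict measurableSet_Iio]
          have hset : Set.Iio t ∩ Set.Ioi (0:ℝ) = Set.Ioo (0:ℝ) t := by
            ext x; simp [Set.mem_Ioo, and_comm]
          rw [hset, lintegral_mul_const _ (by fun_prop),
            lint_Ioo_rpow hs ht, mul_comm]
    _ = ∫⁻ t in Set.Ioi (0:ℝ), ENNReal.ofReal (t ^ s / s) * h t := by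
        rw [lintegral_indicator measurableSet_Ioi]

lemma hardy_pointwise (q α : ℝ) (hq : 1 ≤ q) (hα : 0 < α)
    (f : ℝ → ℝ≥0∞) (hf : Measurable f) {ρ : ℝ} (hρ : 0 < ρ) :
    (∫⁻ t in Set.Ioi ρ, f t) ^ q * ENNReal.ofReal (ρ ^ (α - 1))
      ≤ ENNReal.ofReal ((q/α) ^ (q-1)) * (ENNReal.ofReal (ρ ^ (α/q - 1)) *
          ∫⁻ t in Set.Ioi ρ, (ENNReal.ofReal t * f t) ^ q
            * ENNReal.ofReal (t ^ (α - 1 - α/q))) := by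
  rcases eq_or_lt_of_le hq with rfl | h1
  · simp only [ENNReal.rpow_one, sub_self, Real.rpow_zero, ENNReal.ofReal_one, one_mul, div_one]
    rw [mul_comm]
    refine le_of_eq (by
      congr 1
      refine setLIntegral_congr_fun measurableSet_Ioi (
        fun t ht => ?_)
      have ht0 : (0:ℝ) < t := hρ.trans ht
      rw [show α - 1 - α = -1 by ring, Real.rpow_neg_one, mul_comm (ENNReal.ofReal t) (f t),
        mul_assoc, ← ENNReal.ofReal_mul ht0.le, mul_inv_cancel₀ ht0.ne', ENNReal.ofReal_one,
        mul_one])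
  · -- 1 < q
    have hq0 : (0:ℝ) < q := lt_trans zero_lt_one h1
    obtain ⟨s, hs⟩ : ∃ s, α / q = s := ⟨_, rfl⟩
    rw [hs]
    have hs0 : 0 < s := hs ▸ div_pos hα hq0
    have hαsq : α = s * q := by rw [← hs]; field_simp
    have hqα : q / α = s⁻¹ := by rw [hαsq]; field_simp
    obtain ⟨c, hc⟩ : ∃ c, (1 + s) * (q - 1) / q = c := ⟨_, rfl⟩
    have hq' : q.HolderConjugate (q / (q-1)) := Real.HolderConjugate.conjExponent h1
    obtain ⟨q', hq'_def⟩ : ∃ q', q / (q - 1) = q' := ⟨_, rfl⟩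
    rw [hq'_def] at hq'
    have hq'0 : (0:ℝ) < q' := hq'.symm.pos
    have hq1ne : q - 1 ≠ 0 := sub_ne_zero.mpr h1.ne'
    have hcq' : c * q' = 1 + s := by
      rw [← hc, ← hq'_def]; field_simp
    have hcq : c * q = q + (α - 1 - s) := by
      rw [← hc, hαsq]; field_simp; ring
    set G : ℝ≥0∞ := ∫⁻ t in Set.Ioi ρ, (ENNReal.ofReal t * f t) ^ q
            * ENNReal.ofReal (t ^ (α - 1 - s)) with hG_def
    set A : ℝ≥0∞ := ENNReal.ofReal (ρ ^ (-s) / s) with hA_def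
    -- Hölder
    have holder : (∫⁻ t in Set.Ioi ρ, f t) ≤ G ^ (1/q) * A ^ (1/q') := by
      have hstep : (∫⁻ t in Set.Ioi ρ, f t)
          = ∫⁻ t in Set.Ioi ρ, ((fun t => f t * ENNReal.ofReal (t ^ c))
              * (fun t => ENNReal.ofReal (t ^ (-c)))) t := by
        refine setLIntegral_congr_fun measurableSet_Ioi (
          fun t ht => ?_)
        have ht0 : (0:ℝ) < t := hρ.trans ht
        simp only [Pi.mul_apply]
        rw [mul_assoc, ← ENNReal.ofReal_mul (Real.rpow_nonneg ht0.le _),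
          ← Real.rpow_add ht0, add_neg_cancel, Real.rpow_zero, ENNReal.ofReal_one, mul_one]
      rw [hstep]
      have hH := ENNReal.lintegral_mul_le_Lp_mul_Lq (volume.restrict (Set.Ioi ρ)) hq'
        (by fun_prop : AEMeasurable (fun t => f t * ENNReal.ofReal (t ^ c)) _)
        (by fun_prop : AEMeasurable (fun t => ENNReal.ofReal (t ^ (-c))) _)
      refine hH.trans (le_of_eq ?_)
      congr 1
      · -- first factor equals G ^ (1/q)
        congr 1
        refine setLIntegral_congr_fun measurableSet_Ioi (
          fun t ht => ?_)
        have ht0 : (0:ℝ) < t := hρ.trans ht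
        rw [ENNReal.mul_rpow_of_nonneg _ _ hq0.le, ENNReal.mul_rpow_of_nonneg _ _ hq0.le,
          ENNReal.ofReal_rpow_of_pos (Real.rpow_pos_of_pos ht0 _),
          ENNReal.ofReal_rpow_of_pos ht0,
          ← Real.rpow_mul ht0.le, hcq, mul_right_comm (ENNReal.ofReal (t ^ q)) (f t ^ q),
          ← ENNReal.ofReal_mul (Real.rpow_nonneg ht0.le _), ← Real.rpow_add ht0,
          mul_comm (f t ^ q)]
      · -- second factor
        congr 1
        rw [hA_def, ← lint_Ioi_rpow hs0 hρ]
        refine setLIntegral_congr_fun measurableSet_Ioi (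
          fun t ht => ?_)
        have ht0 : (0:ℝ) < t := hρ.trans ht
        rw [ENNReal.ofReal_rpow_of_pos (Real.rpow_pos_of_pos ht0 _), ← Real.rpow_mul ht0.le]
        congr 2
        rw [neg_mul, hcq']; ring
    -- raise to q-th power
    have hpow : (∫⁻ t in Set.Ioi ρ, f t) ^ q ≤ G * A ^ (q - 1) := by
      calc (∫⁻ t in Set.Ioi ρ, f t) ^ q ≤ (G ^ (1/q) * A ^ (1/q')) ^ q :=
            ENNReal.rpow_le_rpow holder hq0.le
        _ = G * A ^ (q - 1) := by
            rw [ENNReal.mul_rpow_of_nonneg _ _ hq0.le, ← ENNReal.rpow_mul,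
              ← ENNReal.rpow_mul, one_div_mul_cancel hq0.ne', ENNReal.rpow_one]
            congr 2
            rw [div_mul_eq_mul_div, one_mul]
            exact hq'.div_conj_eq_sub_one
    calc (∫⁻ t in Set.Ioi ρ, f t) ^ q * ENNReal.ofReal (ρ ^ (α - 1))
        ≤ G * A ^ (q-1) * ENNReal.ofReal (ρ ^ (α - 1)) :=
          mul_le_mul_left hpow _
      _ = ENNReal.ofReal ((q/α) ^ (q-1)) * (ENNReal.ofReal (ρ ^ (s - 1)) * G) := by
          have key : ρ ^ (-s * (q-1)) / s ^ (q-1) * ρ ^ (α - 1)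
              = (q/α) ^ (q-1) * ρ ^ (s - 1) := by
            rw [hqα, Real.inv_rpow hs0.le, div_mul_eq_mul_div, div_eq_mul_inv,
              ← Real.rpow_add hρ, mul_comm ((s ^ (q-1))⁻¹)]
            congr 2
            rw [hαsq]; ring
          calc G * A ^ (q-1) * ENNReal.ofReal (ρ ^ (α-1))
              = G * ENNReal.ofReal (ρ ^ (-s * (q-1)) / s ^ (q-1) * ρ ^ (α - 1)) := by
                rw [ENNReal.ofReal_mul (by positivity), hA_def,
                  ENNReal.ofReal_rpow_of_pos (div_pos (Real.rpow_pos_of_pos hρ _) hs0),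
                  Real.div_rpow (Real.rpow_nonneg hρ.le _) hs0.le, ← Real.rpow_mul hρ.le,
                  mul_assoc]
            _ = G * ENNReal.ofReal ((q/α) ^ (q-1) * ρ ^ (s - 1)) := by rw [key]
            _ = ENNReal.ofReal ((q/α) ^ (q-1)) * (ENNReal.ofReal (ρ ^ (s - 1)) * G) := by
                rw [ENNReal.ofReal_mul (by positivity)]; ring

/-- Hardy's inequality: for `q ∈ [1,∞)`, `α > 0` and `f : (0,∞) → [0,∞]` measurable,
`(∫₀^∞ (∫_ρ^∞ f(t) dt)^q ρ^α dρ/ρ)^{1/q} ≤ (q/α) (∫₀^∞ (t f(t))^q t^α dt/t)^{1/q}`. -/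
theorem hardy_inequality (q α : ℝ) (hq : 1 ≤ q) (hα : 0 < α)
    (f : ℝ → ℝ≥0∞) (hf : Measurable f) :
    (∫⁻ ρ in Set.Ioi (0:ℝ),
        (∫⁻ t in Set.Ioi ρ, f t) ^ q * ENNReal.ofReal (ρ ^ (α - 1))) ^ (1/q)
      ≤ ENNReal.ofReal (q / α) *
        (∫⁻ t in Set.Ioi (0:ℝ),
            (ENNReal.ofReal t * f t) ^ q * ENNReal.ofReal (t ^ (α - 1))) ^ (1/q) := by
  have hq0 : (0:ℝ) < q := lt_of_lt_of_le zero_lt_one hq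
  have hs0 : 0 < α / q := div_pos hα hq0
  have hqα0 : 0 < q / α := div_pos hq0 hα
  set h : ℝ → ℝ≥0∞ := fun t => (ENNReal.ofReal t * f t) ^ q
      * ENNReal.ofReal (t ^ (α - 1 - α/q)) with hh_def
  have hh : Measurable h := by fun_prop
  set J : ℝ≥0∞ := ∫⁻ t in Set.Ioi (0:ℝ),
      (ENNReal.ofReal t * f t) ^ q * ENNReal.ofReal (t ^ (α - 1)) with hJ_def
  have main : (∫⁻ ρ in Set.Ioi (0:ℝ),
      (∫⁻ t in Set.Ioi ρ, f t) ^ q * ENNReal.ofReal (ρ ^ (α - 1)))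
        ≤ ENNReal.ofReal ((q/α) ^ q) * J := by
    calc ∫⁻ ρ in Set.Ioi (0:ℝ),
          (∫⁻ t in Set.Ioi ρ, f t) ^ q * ENNReal.ofReal (ρ ^ (α - 1))
        ≤ ∫⁻ ρ in Set.Ioi (0:ℝ), ENNReal.ofReal ((q/α) ^ (q-1)) *
            (ENNReal.ofReal (ρ ^ (α/q - 1)) * ∫⁻ t in Set.Ioi ρ, h t) := by
          refine lintegral_mono_ae ((ae_restrict_iff' measurableSet_Ioi).2
            (Filter.Eventually.of_forall fun ρ hρ => ?_))
          exact hardy_pointwise q α hq hα f hf (mem_Ioi.mp hρ)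
      _ = ENNReal.ofReal ((q/α) ^ (q-1)) *
            ∫⁻ ρ in Set.Ioi (0:ℝ),
              ENNReal.ofReal (ρ ^ (α/q - 1)) * ∫⁻ t in Set.Ioi ρ, h t :=
          lintegral_const_mul' _ _ ENNReal.ofReal_ne_top
      _ = ENNReal.ofReal ((q/α) ^ (q-1)) *
            ∫⁻ t in Set.Ioi (0:ℝ), ENNReal.ofReal (t ^ (α/q) / (α/q)) * h t := by
          rw [hardy_fubini h hh hs0]
      _ = ENNReal.ofReal ((q/α) ^ (q-1)) *
            (ENNReal.ofReal (q/α) * J) := by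
          congr 1
          rw [hJ_def, ← lintegral_const_mul' _ _ ENNReal.ofReal_ne_top]
          refine setLIntegral_congr_fun measurableSet_Ioi (
            fun t ht => ?_)
          have ht0 : (0:ℝ) < t := mem_Ioi.mp ht
          rw [hh_def]
          have hre : t ^ (α/q) / (α/q) * t ^ (α - 1 - α/q) = q/α * t ^ (α - 1) := by
            rw [div_mul_eq_mul_div, ← Real.rpow_add ht0,
              show α/q + (α - 1 - α/q) = α - 1 by ring, div_div_eq_mul_div]
            ring
          calc ENNReal.ofReal (t ^ (α/q) / (α/q)) *
                ((ENNReal.ofReal t * f t) ^ q * ENNReal.ofReal (t ^ (α - 1 - α/q)))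
              = ENNReal.ofReal (t ^ (α/q) / (α/q) * t ^ (α - 1 - α/q)) *
                  (ENNReal.ofReal t * f t) ^ q := by
                rw [ENNReal.ofReal_mul (by positivity)]; ring
            _ = ENNReal.ofReal (q/α) *
                  ((ENNReal.ofReal t * f t) ^ q * ENNReal.ofReal (t ^ (α - 1))) := by
                rw [hre, ENNReal.ofReal_mul hqα0.le]; ring
      _ = ENNReal.ofReal ((q/α) ^ q) * J := by
          rw [← mul_assoc, ← ENNReal.ofReal_mul (by positivity)]
          congr 2
          rw [← Real.rpow_add_one hqα0.ne' (q-1), sub_add_cancel]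
  calc (∫⁻ ρ in Set.Ioi (0:ℝ),
        (∫⁻ t in Set.Ioi ρ, f t) ^ q * ENNReal.ofReal (ρ ^ (α - 1))) ^ (1/q)
      ≤ (ENNReal.ofReal ((q/α) ^ q) * J) ^ (1/q) :=
        ENNReal.rpow_le_rpow main (by positivity)
    _ = ENNReal.ofReal (q / α) * J ^ (1/q) := by
        rw [ENNReal.mul_rpow_of_nonneg _ _ (by positivity),
          ENNReal.ofReal_rpow_of_pos (Real.rpow_pos_of_pos hqα0 _),
          ← Real.rpow_mul hqα0.le, mul_one_div_cancel hq0.ne', Real.rpow_one]
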